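/- Let A* maximize a set function F over a finite collection {A_1,...,A_v}, and let A' be the maximizer of F over a sample R of r sets drawn i.i.d. with Pr(A) = F(A)/c for a constant c with c/F(A*) - 1 ≤ r. Then F(A*) - E[F(A')] ≤ (r/(r+1))^r · F(A*). -/

import Mathlib

/-- Proportional sampling theorem: if `r` sets are sampled i.i.d. with probability
`Pr(A) = F(A)/c` and `A'` is the best sampled set, then
`F(A*) - E[F(A')] ≤ (r/(r+1))^r · F(A*)`, provided `c/F(A*) - 1 ≤ r`. -/
theorem proportional_sampling_bound {ι : Type*} [Fintype ι]
    (F : ι → ℝ) (hF : ∀ j, 0 ≤ F j)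
    (c : ℝ) (hc : c = ∑ j, F j)
    (istar : ι) (hstar : ∀ j, F j ≤ F istar) (hpos : 0 < F istar)
    (r : ℕ) (hr : 1 ≤ r) (hrc : c / F istar - 1 ≤ (r : ℝ)) :
    F istar -
      ∑ ω : Fin r → ι, (∏ l, F (ω l) / c) *
        (Finset.univ.sup' ⟨⟨0, hr⟩, Finset.mem_univ _⟩ fun l => F (ω l))
      ≤ ((r : ℝ) / (r + 1)) ^ r * F istar := by
  classical
  have hc0 : 0 < c := by
    rw [hc]
    exact lt_of_lt_of_le hpos (Finset.single_le_sum (fun j _ => hF j) (Finset.mem_univ istar))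
  have hp0 : ∀ j, 0 ≤ F j / c := fun j => div_nonneg (hF j) hc0.le
  have hsum : ∑ j, F j / c = 1 := by
    rw [← Finset.sum_div, ← hc, div_self hc0.ne']
  set q : ℝ := ∑ j ∈ Finset.univ.erase istar, F j / c with hq
  have hq0 : 0 ≤ q := Finset.sum_nonneg fun j _ => hp0 j
  have hq1 : q = 1 - F istar / c := by
    have h := Finset.sum_erase_add Finset.univ (fun j => F j / c) (Finset.mem_univ istar)
    rw [hsum] at h
    linarith
  have hr1 : (0:ℝ) < (r:ℝ) + 1 := by positivity
  have hqle : q ≤ (r:ℝ) / ((r:ℝ) + 1) := by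
    have hcle : c ≤ ((r:ℝ) + 1) * F istar := by
      have h := (div_le_iff₀ hpos).mp (by linarith : c / F istar ≤ (r:ℝ) + 1)
      linarith
    have hpstar : 1 / ((r:ℝ)+1) ≤ F istar / c := by
      rw [div_le_div_iff₀ hr1 hc0]; linarith
    have hrw : (r:ℝ)/((r:ℝ)+1) = 1 - 1/((r:ℝ)+1) := by field_simp; ring
    rw [hq1, hrw]; linarith
  set M : (Fin r → ι) → ℝ := fun ω =>
    Finset.univ.sup' ⟨⟨0, hr⟩, Finset.mem_univ _⟩ fun l => F (ω l) with hM
  have hM0 : ∀ ω, 0 ≤ M ω := fun ω =>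
    le_trans (hF (ω ⟨0, hr⟩)) (Finset.le_sup' (fun l => F (ω l)) (Finset.mem_univ (⟨0, hr⟩ : Fin r)))
  have hall : ∑ ω : Fin r → ι, ∏ l, F (ω l) / c = 1 := by
    have h := Finset.prod_univ_sum (t := fun _ : Fin r => (Finset.univ : Finset ι))
      (f := fun _ j => F j / c)
    rw [← Fintype.piFinset_univ, ← h]
    simp [hsum]
  have hTeq : Finset.univ.filter (fun ω : Fin r → ι => ¬ ∃ l, ω l = istar)
      = Fintype.piFinset (fun _ : Fin r => Finset.univ.erase istar) := by
    ext ω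
    simp [Fintype.mem_piFinset, not_exists]
  have hT : ∑ ω ∈ Finset.univ.filter (fun ω : Fin r → ι => ¬ ∃ l, ω l = istar),
      ∏ l, F (ω l) / c = q ^ r := by
    have h := Finset.prod_univ_sum (t := fun _ : Fin r => Finset.univ.erase istar)
      (f := fun _ j => F j / c)
    rw [hTeq, ← h, ← hq]
    simp
  have hS : ∑ ω ∈ Finset.univ.filter (fun ω : Fin r → ι => ∃ l, ω l = istar),
      ∏ l, F (ω l) / c = 1 - q ^ r := by
    have h := Finset.sum_filter_add_sum_filter_not Finset.univ
      (fun ω : Fin r → ι => ∃ l, ω l = istar) (fun ω => ∏ l, F (ω l) / c)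
    rw [hall, hT] at h
    linarith
  have hE : F istar * (1 - q ^ r) ≤ ∑ ω : Fin r → ι, (∏ l, F (ω l) / c) * M ω := by
    have hsplit := Finset.sum_filter_add_sum_filter_not Finset.univ
      (fun ω : Fin r → ι => ∃ l, ω l = istar)
      (fun ω => (∏ l, F (ω l) / c) * M ω)
    have h1 : F istar * (1 - q ^ r) ≤
        ∑ ω ∈ Finset.univ.filter (fun ω : Fin r → ι => ∃ l, ω l = istar),
          (∏ l, F (ω l) / c) * M ω := by
      rw [← hS, Finset.mul_sum]
      apply Finset.sum_le_sum
      intro ω hω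
      rw [Finset.mem_filter] at hω
      obtain ⟨l, hl⟩ := hω.2
      have hMge : F istar ≤ M ω := by
        rw [← hl]
        exact Finset.le_sup' (fun l => F (ω l)) (Finset.mem_univ l)
      have hprod : 0 ≤ ∏ l, F (ω l) / c := Finset.prod_nonneg fun l _ => hp0 _
      rw [mul_comm (F istar)]
      exact mul_le_mul_of_nonneg_left hMge hprod
    have h2 : (0:ℝ) ≤
        ∑ ω ∈ Finset.univ.filter (fun ω : Fin r → ι => ¬ ∃ l, ω l = istar),
          (∏ l, F (ω l) / c) * M ω :=
      Finset.sum_nonneg fun ω _ =>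
        mul_nonneg (Finset.prod_nonneg fun l _ => hp0 _) (hM0 ω)
    linarith
  have hfinal : q ^ r * F istar ≤ ((r:ℝ) / ((r:ℝ) + 1)) ^ r * F istar :=
    mul_le_mul_of_nonneg_right (pow_le_pow_left₀ hq0 hqle r) hpos.le
  have : ((r:ℝ) + 1 : ℝ) = ((r:ℝ) + 1) := rfl
  calc F istar - ∑ ω : Fin r → ι, (∏ l, F (ω l) / c) * M ω
      ≤ F istar - F istar * (1 - q ^ r) := by linarith
    _ = q ^ r * F istar := by ring
    _ ≤ ((r:ℝ) / ((r:ℝ) + 1)) ^ r * F istar := hfinal
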